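/- Let k be a field and n a natural number. Let FI be the category of finite sets of natural numbers and injective functions, and let FI_{≤n} be its full subcategory of sets of cardinality at most n. Let V be a finitely generated, pointwise finite-dimensional functor FI → Vect_k. If p : P → V is a projective cover in the category of functors FI → Vect_k, then its restriction Rp : RP → RV is a projective cover in the category of functors FI_{≤n} → Vect_k. -/

import Mathlib

open CategoryTheory CategoryTheory.Limits

/-- Objects of the category `FI` : finite sets of natural numbers. -/
structure FIcat where
  carrier : Finset ℕ

/-- The category `FI` : finite sets of natural numbers with injections between them. -/
instance : Category FIcat where
  Hom S T := { f : S.carrier → T.carrier // Function.Injective f }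
  id S := ⟨id, fun _ _ h => h⟩
  comp f g := ⟨g.1 ∘ f.1, fun _ _ h => f.2 (g.2 h)⟩

/-- A subfunctor of a functor `V : C ⥤ ModuleCat k` : a choice of submodule of each value,
closed under the action of all morphisms. -/
structure Subfunctor {k : Type} [Field k] {C : Type*} [Category C]
    (V : C ⥤ ModuleCat.{0} k) where
  toFun : ∀ S : C, Submodule k (V.obj S)
  map_mem : ∀ {S T : C} (f : S ⟶ T) (v : V.obj S), v ∈ toFun S → V.map f v ∈ toFun T

/-- A functor `V : C ⥤ ModuleCat k` is finitely generated if there are finitely many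
elements `v i ∈ V (S i)` such that the only subfunctor of `V` containing all of them is
`V` itself. -/
def IsFinitelyGenerated {k : Type} [Field k] {C : Type*} [Category C]
    (V : C ⥤ ModuleCat.{0} k) : Prop :=
  ∃ (ι : Type) (_ : Finite ι) (S : ι → C) (v : ∀ i : ι, V.obj (S i)),
    ∀ W : Subfunctor V, (∀ i, v i ∈ W.toFun (S i)) → ∀ X, W.toFun X = ⊤

/-- `p : P ⟶ V` is a projective cover : `P` is projective, `p` is an epimorphism, and any
morphism `g : Q ⟶ P` such that `g ≫ p` is an epimorphism is itself an epimorphism. -/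
def IsProjectiveCover {A : Type*} [Category A] {P V : A} (p : P ⟶ V) : Prop :=
  Projective P ∧ Epi p ∧ ∀ (Q : A) (g : Q ⟶ P), Epi (g ≫ p) → Epi g

namespace RestrictionAux

variable {k : Type} [Field k] {n : ℕ}

/-- The full subcategory of sets of cardinality at most `n`. -/
abbrev FIle (n : ℕ) := ObjectProperty.FullSubcategory fun S : FIcat => S.carrier.card ≤ n

lemma card_le_of_hom {S T : FIcat} (f : S ⟶ T) : S.carrier.card ≤ T.carrier.card := by
  simpa using Fintype.card_le_of_injective f.1 f.2

/-- Zero-extension of a functor on `FI_{≤n}`, on objects. -/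
noncomputable def extObj (X : FIle n ⥤ ModuleCat.{0} k) (S : FIcat) : ModuleCat.{0} k :=
  if h : S.carrier.card ≤ n then X.obj ⟨S, h⟩ else ModuleCat.of k PUnit

lemma extObj_pos (X : FIle n ⥤ ModuleCat.{0} k) {S : FIcat} (h : S.carrier.card ≤ n) :
    extObj X S = X.obj ⟨S, h⟩ := dif_pos h

lemma isZero_extObj (X : FIle n ⥤ ModuleCat.{0} k) {S : FIcat} (h : ¬ S.carrier.card ≤ n) :
    IsZero (extObj X S) := by
  rw [extObj, dif_neg h]
  exact ModuleCat.isZero_of_subsingleton _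

/-- Zero-extension, on morphisms. -/
noncomputable def extMap (X : FIle n ⥤ ModuleCat.{0} k) {S T : FIcat} (f : S ⟶ T) :
    extObj X S ⟶ extObj X T :=
  if hT : T.carrier.card ≤ n then
    eqToHom (extObj_pos X (le_trans (card_le_of_hom f) hT)) ≫
      X.map (ObjectProperty.homMk (X := (⟨S, le_trans (card_le_of_hom f) hT⟩ : FIle n)) (Y := ⟨T, hT⟩) f) ≫
      eqToHom (extObj_pos X hT).symm
  else 0

lemma extMap_pos (X : FIle n ⥤ ModuleCat.{0} k) {S T : FIcat} (f : S ⟶ T)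
    (hT : T.carrier.card ≤ n) (hS : S.carrier.card ≤ n) :
    extMap X f = eqToHom (extObj_pos X hS) ≫
      X.map (ObjectProperty.homMk (X := (⟨S, hS⟩ : FIle n)) (Y := ⟨T, hT⟩) f) ≫ eqToHom (extObj_pos X hT).symm :=
  dif_pos hT

/-- Zero-extension of a functor on `FI_{≤n}`. -/
noncomputable def extFunctor (X : FIle n ⥤ ModuleCat.{0} k) : FIcat ⥤ ModuleCat.{0} k where
  obj := extObj X
  map := extMap X
  map_id S := by
    show extMap X (𝟙 S) = 𝟙 (extObj X S)
    by_cases h : S.carrier.card ≤ n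
    · rw [extMap_pos X (𝟙 S) h h]
      have : (ObjectProperty.homMk (X := (⟨S, h⟩ : FIle n)) (Y := ⟨S, h⟩) (𝟙 S)) = 𝟙 (⟨S, h⟩ : FIle n) := rfl
      rw [this, X.map_id]
      simp
    · exact (isZero_extObj X h).eq_of_tgt _ _
  map_comp {S T U} f g := by
    show extMap X (f ≫ g) = extMap X f ≫ extMap X g
    by_cases hU : U.carrier.card ≤ n
    · have hT : T.carrier.card ≤ n := le_trans (card_le_of_hom g) hU
      have hS : S.carrier.card ≤ n := le_trans (card_le_of_hom f) hT
      rw [extMap_pos X (f ≫ g) hU hS, extMap_pos X f hT hS, extMap_pos X g hU hT]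
      have : (ObjectProperty.homMk (X := (⟨S, hS⟩ : FIle n)) (Y := ⟨U, hU⟩) (f ≫ g)) =
          ((ObjectProperty.homMk (X := (⟨S, hS⟩ : FIle n)) (Y := ⟨T, hT⟩) f) ≫
            (ObjectProperty.homMk (X := (⟨T, hT⟩ : FIle n)) (Y := ⟨U, hU⟩) g) :
            (⟨S, hS⟩ : FIle n) ⟶ ⟨U, hU⟩) := rfl
      rw [this, X.map_comp]
      simp
    · exact (isZero_extObj X hU).eq_of_tgt _ _

lemma extFunctor_map_pos (X : FIle n ⥤ ModuleCat.{0} k) {S T : FIcat} (f : S ⟶ T)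
    (hT : T.carrier.card ≤ n) (hS : S.carrier.card ≤ n) :
    (extFunctor X).map f = eqToHom (extObj_pos X hS) ≫
      X.map (ObjectProperty.homMk (X := (⟨S, hS⟩ : FIle n)) (Y := ⟨T, hT⟩) f) ≫ eqToHom (extObj_pos X hT).symm :=
  extMap_pos X f hT hS

/-- Extend a natural transformation out of a restriction. -/
noncomputable def homExt {P' : FIcat ⥤ ModuleCat.{0} k} {Y : FIle n ⥤ ModuleCat.{0} k}
    (f : ObjectProperty.ι (fun S : FIcat => S.carrier.card ≤ n) ⋙ P' ⟶ Y) :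
    P' ⟶ extFunctor Y where
  app S :=
    if hS : S.carrier.card ≤ n then f.app ⟨S, hS⟩ ≫ eqToHom (extObj_pos Y hS).symm
    else 0
  naturality {S T} f' := by
    by_cases hT : T.carrier.card ≤ n
    · have hS : S.carrier.card ≤ n := le_trans (card_le_of_hom f') hT
      show P'.map f' ≫ (dite _ _ _) = (dite _ _ _) ≫ (extFunctor Y).map f'
      rw [dif_pos hT, dif_pos hS, extFunctor_map_pos Y f' hT hS]
      have := f.naturality (ObjectProperty.homMk (X := (⟨S, hS⟩ : FIle n)) (Y := ⟨T, hT⟩) f')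
      simp only [Functor.comp_map, ObjectProperty.ι_map] at this
      change P'.map f' ≫ _ = _ at this
      dsimp only [extFunctor]
      simp [reassoc_of% this]
    · exact (isZero_extObj Y hT).eq_of_tgt _ _

/-- Extend a natural transformation. -/
noncomputable def extHom {X Y : FIle n ⥤ ModuleCat.{0} k} (e : X ⟶ Y) :
    extFunctor X ⟶ extFunctor Y where
  app S :=
    if hS : S.carrier.card ≤ n then
      eqToHom (extObj_pos X hS) ≫ e.app ⟨S, hS⟩ ≫ eqToHom (extObj_pos Y hS).symm
    else 0
  naturality {S T} f' := by
    by_cases hT : T.carrier.card ≤ n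
    · have hS : S.carrier.card ≤ n := le_trans (card_le_of_hom f') hT
      show (extFunctor X).map f' ≫ (dite _ _ _) = (dite _ _ _) ≫ (extFunctor Y).map f'
      rw [dif_pos hT, dif_pos hS, extFunctor_map_pos X f' hT hS,
        extFunctor_map_pos Y f' hT hS]
      have := e.naturality (ObjectProperty.homMk (X := (⟨S, hS⟩ : FIle n)) (Y := ⟨T, hT⟩) f')
      dsimp only [extFunctor]
      simp [reassoc_of% this]
    · exact (isZero_extObj Y hT).eq_of_tgt _ _

instance extHom_epi {X Y : FIle n ⥤ ModuleCat.{0} k} (e : X ⟶ Y) [Epi e] :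
    Epi (extHom e) := by
  haveI : ∀ S : FIcat, Epi ((extHom e).app S) := by
    intro S
    by_cases hS : S.carrier.card ≤ n
    · show Epi (dite _ _ _)
      rw [dif_pos hS]
      haveI : Epi (e.app ⟨S, hS⟩) := (NatTrans.epi_iff_epi_app e).mp inferInstance _
      exact @epi_comp _ _ _ _ _ _ (@IsIso.epi_of_iso _ _ _ _ _ (Iso.isIso_hom (eqToIso (extObj_pos X hS)))) _ (@epi_comp _ _ _ _ _ _ inferInstance _ (@IsIso.epi_of_iso _ _ _ _ _ (Iso.isIso_hom (eqToIso (extObj_pos Y hS).symm))))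
    · exact ⟨fun u v _ => (isZero_extObj Y hS).eq_of_src u v⟩
  exact NatTrans.epi_of_epi_app _

/-- Restrict a natural transformation into an extension. -/
noncomputable def resHom {P' : FIcat ⥤ ModuleCat.{0} k} {X : FIle n ⥤ ModuleCat.{0} k}
    (h : P' ⟶ extFunctor X) :
    ObjectProperty.ι (fun S : FIcat => S.carrier.card ≤ n) ⋙ P' ⟶ X where
  app S := h.app S.obj ≫ eqToHom (extObj_pos X S.property)
  naturality {S T} f' := by
    have := h.naturality f'.hom
    show P'.map f'.hom ≫ _ = _
    rw [reassoc_of% this]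
    show (h.app S.obj ≫ (extFunctor X).map f'.hom) ≫ _ = _
    rw [extFunctor_map_pos X f'.hom T.property S.property]
    have hf : ObjectProperty.homMk f'.hom = f' := rfl
    dsimp only [extFunctor]
    simp [hf]

end RestrictionAux

open RestrictionAux in
theorem restriction_preserves_projective_covers (k : Type) [Field k] (n : ℕ)
    (V : FIcat ⥤ ModuleCat.{0} k)
    (hfd : ∀ S : FIcat, FiniteDimensional k (V.obj S))
    (hfg : IsFinitelyGenerated V)
    (P : FIcat ⥤ ModuleCat.{0} k) (p : P ⟶ V) (hp : IsProjectiveCover p) :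
    IsProjectiveCover
      (Functor.whiskerLeft (ObjectProperty.ι fun S : FIcat => S.carrier.card ≤ n) p) := by
  obtain ⟨hproj, hepi, hcover⟩ := hp
  refine ⟨?_, ?_, ?_⟩
  · -- projectivity of the restriction
    constructor
    intro E X f e he
    obtain ⟨h, hh⟩ := hproj.factors (homExt f) (extHom e)
    refine ⟨resHom h, ?_⟩
    apply NatTrans.ext
    funext S
    rw [NatTrans.comp_app]
    have := congrArg (fun q => NatTrans.app q S.obj) hh
    dsimp at this
    rw [show (homExt f).app S.obj = dite _ _ _ from rfl,
      show (extHom e).app S.obj = dite _ _ _ from rfl,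
      dif_pos S.property, dif_pos S.property] at this
    show (h.app S.obj ≫ eqToHom (extObj_pos E S.property)) ≫ e.app S = f.app S
    have h2 := congrArg (fun q => q ≫ eqToHom (extObj_pos _ S.property)) this
    dsimp only [extFunctor] at h2
    simp at h2
    exact h2
  · -- epi
    rw [NatTrans.epi_iff_epi_app]
    intro S
    haveI := hepi
    show Epi (p.app S.obj)
    infer_instance
  · -- minimality
    intro Q g hg
    -- the subfunctor of `P` : image of `g` in small degrees, everything in large degrees
    set Wsub : ∀ S : FIcat, Submodule k (P.obj S) := fun S =>
      if hS : S.carrier.card ≤ n then LinearMap.range (g.app ⟨S, hS⟩).hom else ⊤ with hWsub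
    have hmem : ∀ {S T : FIcat} (f : S ⟶ T) (x : P.obj S),
        x ∈ Wsub S → P.map f x ∈ Wsub T := by
      intro S T f x hx
      by_cases hT : T.carrier.card ≤ n
      · have hS : S.carrier.card ≤ n := le_trans (card_le_of_hom f) hT
        rw [hWsub] at hx ⊢
        dsimp only at hx ⊢
        rw [dif_pos hT]
        rw [dif_pos hS] at hx
        obtain ⟨q, hq⟩ := hx
        have := congrArg (fun m => m q)
          (g.naturality (ObjectProperty.homMk (X := (⟨S, hS⟩ : FIle n)) (Y := ⟨T, hT⟩) f))
        dsimp at this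
        exact ⟨Q.map (ObjectProperty.homMk (X := (⟨S, hS⟩ : FIle n)) (Y := ⟨T, hT⟩) f) q, by
          rw [this, hq]⟩
      · rw [hWsub]
        dsimp only
        rw [dif_neg hT]
        trivial
    let W : FIcat ⥤ ModuleCat.{0} k :=
      { obj := fun S => ModuleCat.of k (Wsub S)
        map := fun {S T} f => ModuleCat.ofHom ((P.map f).hom.restrict (fun x hx => hmem f x hx))
        map_id := fun S => by
          ext x
          show P.map (𝟙 S) x.1 = x.1
          rw [P.map_id]
          rfl
        map_comp := fun {S T U} f f' => by
          ext x
          show P.map (f ≫ f') x.1 = P.map f' (P.map f x.1)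
          rw [P.map_comp]
          rfl }
    let ι : W ⟶ P :=
      { app := fun S => ModuleCat.ofHom (Wsub S).subtype
        naturality := fun {S T} f => rfl }
    have hιp : Epi (ι ≫ p) := by
      rw [NatTrans.epi_iff_epi_app]
      intro S
      rw [ModuleCat.epi_iff_surjective]
      intro v
      by_cases hS : S.carrier.card ≤ n
      · haveI := hg
        haveI : Epi ((g ≫ Functor.whiskerLeft (ObjectProperty.ι
            fun S : FIcat => S.carrier.card ≤ n) p).app ⟨S, hS⟩) := inferInstance
        rw [ModuleCat.epi_iff_surjective] at this
        obtain ⟨q, hq⟩ := this v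
        refine ⟨⟨g.app ⟨S, hS⟩ q, ?_⟩, hq⟩
        rw [hWsub]
        dsimp only
        rw [dif_pos hS]
        exact ⟨q, rfl⟩
      · haveI := hepi
        haveI : Epi (p.app S) := inferInstance
        rw [ModuleCat.epi_iff_surjective] at this
        obtain ⟨u, hu⟩ := this v
        refine ⟨⟨u, ?_⟩, hu⟩
        rw [hWsub]
        dsimp only
        rw [dif_neg hS]
        trivial
    have hι : Epi ι := hcover W ι hιp
    haveI : ∀ S : FIle n, Epi (g.app S) := by
      intro S
      rw [ModuleCat.epi_iff_surjective]
      intro v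
      have : Epi (ι.app S.obj) := (NatTrans.epi_iff_epi_app ι).mp hι S.obj
      rw [ModuleCat.epi_iff_surjective] at this
      obtain ⟨⟨w, hw⟩, hw2⟩ := this v
      rw [show Wsub S.obj = dite _ _ _ from rfl, dif_pos S.property] at hw
      obtain ⟨q, hq⟩ := hw
      refine ⟨q, ?_⟩
      have hq' : (g.app S) q = w := hq
      rw [hq']
      exact hw2
    exact NatTrans.epi_of_epi_app _
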